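/- Let Φ be a monotone NAE-3-SAT instance in which each variable occurs in exactly four clauses, and let G(Φ) be the edge-colored graph constructed from Φ. If Φ has a not-all-equal truth assignment, then the edge set of G(Φ) can be partitioned into two rainbow spanning trees. -/

import Mathlib

namespace PackingRainbowStmt1

/-- An edge of the multigraph connects via set `F`: there is an edge in `F` with
endpoints `a` and `b`. -/
def Step {V E : Type*} (ends : E → Sym2 V) (F : Set E) (a b : V) : Prop :=
  ∃ e ∈ F, ends e = s(a, b)

/-- The edge set `F` makes the multigraph with endpoint map `ends` connected
(any two vertices are joined by a walk using edges of `F`). -/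
def Connects {V E : Type*} (ends : E → Sym2 V) (F : Set E) : Prop :=
  ∀ a b : V, Relation.ReflTransGen (Step ends F) a b

/-- `F` is a spanning tree: it connects all vertices, minimally so. -/
def IsSpanningTree {V E : Type*} (ends : E → Sym2 V) (F : Set E) : Prop :=
  Connects ends F ∧ ∀ e ∈ F, ¬ Connects ends (F \ {e})

/-- `F` is rainbow: each color class contains at most one edge of `F`. -/
def Rainbow {E C : Type*} (color : E → C) (F : Set E) : Prop :=
  ∀ e ∈ F, ∀ f ∈ F, color e = color f → e = f

/-- A monotone NAE-3-SAT instance with `n` variables and `m` clauses in which every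
clause contains three distinct variables and every variable occurs in exactly four
clauses.  `occ (j, q) = (i, p)` means that the `q`-th variable of clause `j` is the
variable `i`, and that this is the `p`-th occurrence of `i` in the order of the
clauses.  Bijectivity of `occ` encodes that every variable occurs exactly four times. -/
structure NAE4Instance (n m : ℕ) where
  occ : (Fin m × Fin 3) ≃ (Fin n × Fin 4)
  distinct : ∀ j : Fin m, Function.Injective fun q : Fin 3 => (occ (j, q)).1
  mono : ∀ j q j' q', (occ (j, q)).1 = (occ (j', q')).1 →
    Prod.Lex (· < ·) (· < ·) (j, q) (j', q') → (occ (j, q)).2 < (occ (j', q')).2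

/-- `Φ` has a not-all-equal truth assignment: every clause contains
at least one true and at least one false variable. -/
def HasNAEAssignment {n m : ℕ} (Φ : NAE4Instance n m) : Prop :=
  ∃ a : Fin n → Bool, ∀ j : Fin m,
    (∃ q : Fin 3, a (Φ.occ (j, q)).1 = true) ∧ (∃ q : Fin 3, a (Φ.occ (j, q)).1 = false)

/-- Vertices of the graph `G(Φ)`: for every variable `i` and `p ∈ [4]` the four
vertices `u i p, v i p, w i p, z i p` of a `K₄`; for every clause `j` the triangle
vertices `c j q`; and the extra vertex `r`. -/
inductive Vtx (n m : ℕ) where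
  | u (i : Fin n) (p : Fin 4)
  | v (i : Fin n) (p : Fin 4)
  | w (i : Fin n) (p : Fin 4)
  | z (i : Fin n) (p : Fin 4)
  | c (j : Fin m) (q : Fin 3)
  | r
  deriving DecidableEq, Fintype

/-- Edges of `G(Φ)`: the six edges of each `K₄`; the triangle edges
`c j q — c j (q+1)`; the edges `z^{i_q}_ℓ — c j q`; and two parallel
edges between `r` and each `u i p`. -/
inductive Edg (n m : ℕ) where
  | uv (i : Fin n) (p : Fin 4)
  | uw (i : Fin n) (p : Fin 4)
  | uz (i : Fin n) (p : Fin 4)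
  | vw (i : Fin n) (p : Fin 4)
  | vz (i : Fin n) (p : Fin 4)
  | wz (i : Fin n) (p : Fin 4)
  | tri (j : Fin m) (q : Fin 3)
  | zc (j : Fin m) (q : Fin 3)
  | ru (i : Fin n) (p : Fin 4) (b : Fin 2)
  deriving DecidableEq, Fintype

/-- The colors of the edge-coloring of `G(Φ)`. -/
inductive Col (n m : ℕ) where
  | rpar (i : Fin n) (p : Fin 4)
  | ca (i : Fin n) (p : Fin 4)
  | cb (i : Fin n) (p : Fin 4)
  | cc (i : Fin n) (p : Fin 4)
  | cd (i : Fin n) (p : Fin 4)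
  deriving DecidableEq, Fintype

/-- Endpoints of the edges of `G(Φ)`. -/
def ends {n m : ℕ} (Φ : NAE4Instance n m) : Edg n m → Sym2 (Vtx n m)
  | .uv i p => s(.u i p, .v i p)
  | .uw i p => s(.u i p, .w i p)
  | .uz i p => s(.u i p, .z i p)
  | .vw i p => s(.v i p, .w i p)
  | .vz i p => s(.v i p, .z i p)
  | .wz i p => s(.w i p, .z i p)
  | .tri j q => s(.c j q, .c j (q + 1))
  | .zc j q => s(.z (Φ.occ (j, q)).1 (Φ.occ (j, q)).2, .c j q)
  | .ru i p _ => s(.r, .u i p)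

/-- The edge-coloring of `G(Φ)`: the two parallel edges at `r` to `u i p` form the
class `rpar i p`; the classes corresponding to variable `i` and `p ∈ [4]` are
`ca i p = {w^i_p z^i_p, z^i_p c^{j_p}_{q_p}}`, `cb i p = {v^i_p z^i_p, u^i_{p+1} v^i_{p+1}}`,
`cc i p = {u^i_p z^i_p, v^i_p w^i_p}` and `cd i p = {u^i_p w^i_p, c^{j_p}_{q_p} c^{j_p}_{q_p+1}}`,
where `c^{j_p}_{q_p}` is the triangle neighbor of `z^i_p`, i.e. `(j_p, q_p) = Φ.occ.symm (i, p)`. -/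
def color {n m : ℕ} (Φ : NAE4Instance n m) : Edg n m → Col n m
  | .ru i p _ => .rpar i p
  | .wz i p => .ca i p
  | .zc j q => .ca (Φ.occ (j, q)).1 (Φ.occ (j, q)).2
  | .vz i p => .cb i p
  | .uv i p => .cb i (p - 1)
  | .uz i p => .cc i p
  | .vw i p => .cc i p
  | .uw i p => .cd i p
  | .tri j q => .cd (Φ.occ (j, q)).1 (Φ.occ (j, q)).2

/-- The edge set of `G(Φ)` can be partitioned into the two rainbow
spanning trees `T₁` and `T₂`. -/
def TwoRainbowSpanningTrees {n m : ℕ} (Φ : NAE4Instance n m) (T₁ T₂ : Set (Edg n m)) : Prop :=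
  T₁ ∪ T₂ = Set.univ ∧ Disjoint T₁ T₂ ∧
    IsSpanningTree (ends Φ) T₁ ∧ IsSpanningTree (ends Φ) T₂ ∧
    Rainbow (color Φ) T₁ ∧ Rainbow (color Φ) T₂

/-! ### Auxiliary construction -/

/-- The tree determined by assignment `b` and parallel-edge index `k`. -/
def TT {n m : ℕ} (Φ : NAE4Instance n m) (b : Fin n → Bool) (k : Fin 2) : Set (Edg n m)
  | .ru _ _ b' => b' = k
  | .uz i _ => b i = true
  | .uw i _ => b i = true
  | .vz i _ => b i = true
  | .uv i _ => b i = false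
  | .vw i _ => b i = false
  | .wz i _ => b i = false
  | .zc j q => b (Φ.occ (j, q)).1 = true
  | .tri j q => b (Φ.occ (j, q)).1 = false

/-- Parent pointer of the tree `TT Φ b k`, rooted at `r`. -/
def par {n m : ℕ} (Φ : NAE4Instance n m) (b : Fin n → Bool) : Vtx n m → Vtx n m
  | .r => .r
  | .u _ _ => .r
  | .v i p => if b i then .z i p else .u i p
  | .w i p => if b i then .u i p else .v i p
  | .z i p => if b i then .u i p else .w i p
  | .c j q => if b (Φ.occ (j, q)).1 then .z (Φ.occ (j, q)).1 (Φ.occ (j, q)).2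
              else .c j (q + 1)

/-- The edge joining a vertex to its parent. -/
def pe {n m : ℕ} (Φ : NAE4Instance n m) (b : Fin n → Bool) (k : Fin 2) :
    Vtx n m → Option (Edg n m)
  | .r => none
  | .u i p => some (.ru i p k)
  | .v i p => some (if b i then .vz i p else .uv i p)
  | .w i p => some (if b i then .uw i p else .vw i p)
  | .z i p => some (if b i then .uz i p else .wz i p)
  | .c j q => some (if b (Φ.occ (j, q)).1 then .zc j q else .tri j q)

/-- Rank (distance-to-root bound), decreasing along parents. -/
def rk {n m : ℕ} (Φ : NAE4Instance n m) (b : Fin n → Bool) : Vtx n m → ℕ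
  | .r => 0
  | .u _ _ => 1
  | .v i _ => if b i then 3 else 2
  | .w i _ => if b i then 2 else 3
  | .z i _ => if b i then 2 else 4
  | .c j q => if b (Φ.occ (j, q)).1 then 3
              else if b (Φ.occ (j, q + 1)).1 then 4 else 5

section Tree

variable {n m : ℕ} (Φ : NAE4Instance n m) (b : Fin n → Bool) (k : Fin 2)

lemma pe_spec : ∀ x : Vtx n m, ∀ e, pe Φ b k x = some e →
    e ∈ TT Φ b k ∧ ends Φ e = s(x, par Φ b x) := by
  intro x e hx
  cases x <;> simp only [pe, Option.some.injEq] at hx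
  case r => cases hx
  case u i p =>
    subst hx
    simp [TT, Set.Mem, Membership.mem, par, ends]
  case v i p =>
    by_cases hb : b i <;> simp [hb] at hx <;> subst hx <;>
      simp [TT, Set.Mem, Membership.mem, par, ends, hb, Sym2.eq_swap]
  case w i p =>
    by_cases hb : b i <;> simp [hb] at hx <;> subst hx <;>
      simp [TT, Set.Mem, Membership.mem, par, ends, hb, Sym2.eq_swap]
  case z i p =>
    by_cases hb : b i <;> simp [hb] at hx <;> subst hx <;>
      simp [TT, Set.Mem, Membership.mem, par, ends, hb, Sym2.eq_swap]
  case c j q =>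
    by_cases hb : b (Φ.occ (j, q)).1 <;> simp [hb] at hx <;> subst hx <;>
      simp [TT, Set.Mem, Membership.mem, par, ends, hb, Sym2.eq_swap]

lemma pe_surj : ∀ e ∈ TT Φ b k, ∃ x, pe Φ b k x = some e := by
  intro e he
  cases e <;> simp only [TT, Set.Mem, Membership.mem] at he
  case uv i p => exact ⟨.v i p, by simp [pe, he]⟩
  case uw i p => exact ⟨.w i p, by simp [pe, he]⟩
  case uz i p => exact ⟨.z i p, by simp [pe, he]⟩
  case vw i p => exact ⟨.w i p, by simp [pe, he]⟩
  case vz i p => exact ⟨.v i p, by simp [pe, he]⟩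
  case wz i p => exact ⟨.z i p, by simp [pe, he]⟩
  case tri j q => exact ⟨.c j q, by simp [pe, he]⟩
  case zc j q => exact ⟨.c j q, by simp [pe, he]⟩
  case ru i p b' => exact ⟨.u i p, by simp [pe, he]⟩

lemma rk_le : ∀ x : Vtx n m, rk Φ b x ≤ 5 := by
  intro x
  cases x <;> simp only [rk] <;>
    first | omega | (split <;> first | omega | (split <;> omega))

lemma rk_eq_zero : ∀ x : Vtx n m, rk Φ b x = 0 → x = .r := by
  intro x hx
  cases x
  case r => rfl
  all_goals
    exfalso
    simp only [rk] at hx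
    first
      | omega
      | (split at hx <;> first | omega | (split at hx <;> omega))

variable (hb : ∀ j : Fin m, ∃ q : Fin 3, b (Φ.occ (j, q)).1 = true)

lemma fin3cover : ∀ a c : Fin 3, c = a ∨ c = a + 1 ∨ c = a + 1 + 1 := by decide

include hb in
lemma rk_par : ∀ x : Vtx n m, x ≠ .r → rk Φ b (par Φ b x) < rk Φ b x := by
  intro x hx
  cases x
  case r => exact absurd rfl hx
  case u i p => simp [par, rk]
  case v i p => cases h : b i <;> simp [par, rk, h]
  case w i p => cases h : b i <;> simp [par, rk, h]
  case z i p => cases h : b i <;> simp [par, rk, h]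
  case c j q =>
    cases h0 : b (Φ.occ (j, q)).1
    · cases h1 : b (Φ.occ (j, q + 1)).1
      · cases h2 : b (Φ.occ (j, q + 1 + 1)).1
        · exfalso
          obtain ⟨q', hq'⟩ := hb j
          rcases fin3cover q q' with rfl | rfl | rfl
          · rw [hq'] at h0; exact Bool.noConfusion h0
          · rw [hq'] at h1; exact Bool.noConfusion h1
          · rw [hq'] at h2; exact Bool.noConfusion h2
        · simp [par, rk, h0, h1, h2]
      · simp [par, rk, h0, h1]
    · simp [par, rk, h0]

include hb in
lemma par_iter_root : ∀ N : ℕ, ∀ x : Vtx n m, rk Φ b x ≤ N → (par Φ b)^[N] x = .r := by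
  intro N
  induction N with
  | zero => intro x hx; simpa using rk_eq_zero Φ b x (Nat.le_zero.mp hx)
  | succ N ih =>
    intro x hx
    by_cases hr : x = .r
    · subst hr; exact Function.iterate_fixed rfl _
    · rw [Function.iterate_succ_apply]
      exact ih _ (by have := rk_par Φ b hb x hr; omega)

include hb in
lemma rk_par_le : ∀ x : Vtx n m, rk Φ b (par Φ b x) ≤ rk Φ b x := by
  intro x
  by_cases hr : x = .r
  · subst hr; simp [par]
  · exact (rk_par Φ b hb x hr).le

include hb in
lemma rk_iter_le : ∀ K : ℕ, ∀ x : Vtx n m, rk Φ b ((par Φ b)^[K] x) ≤ rk Φ b x := by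
  intro K
  induction K with
  | zero => intro x; simp
  | succ K ih =>
    intro x
    rw [Function.iterate_succ_apply]
    exact (ih _).trans (rk_par_le Φ b hb x)

lemma step_symm : Symmetric (Step (ends Φ) (F : Set (Edg n m))) := by
  rintro x y ⟨e, he, hends⟩
  exact ⟨e, he, hends.trans (Sym2.eq_swap)⟩

lemma pe_some_of_ne_root : ∀ x : Vtx n m, x ≠ .r → ∃ e, pe Φ b k x = some e := by
  intro x hx
  cases x
  case r => exact absurd rfl hx
  all_goals exact ⟨_, rfl⟩

include hb in
lemma connects_TT : Connects (ends Φ) (TT Φ b k) := by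
  have toR : ∀ N : ℕ, ∀ x : Vtx n m, rk Φ b x ≤ N →
      Relation.ReflTransGen (Step (ends Φ) (TT Φ b k)) x .r := by
    intro N
    induction N with
    | zero => intro x hx; rw [rk_eq_zero Φ b x (Nat.le_zero.mp hx)]
    | succ N ih =>
      intro x hx
      by_cases hr : x = .r
      · subst hr; rfl
      · obtain ⟨e, he⟩ := pe_some_of_ne_root Φ b k x hr
        obtain ⟨hmem, hends⟩ := pe_spec Φ b k x e he
        refine Relation.ReflTransGen.head ⟨e, hmem, hends⟩ ?_
        exact ih _ (by have := rk_par Φ b hb x hr; omega)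
  intro a c
  have h1 := toR 5 a (rk_le Φ b a)
  have h2 := toR 5 c (rk_le Φ b c)
  exact h1.trans (by haveI : Std.Symm (Step (ends Φ) (TT Φ b k)) := ⟨step_symm Φ⟩; exact Std.Symm.symm _ _ h2)

lemma walk_invariant {V E : Type*} (ends : E → Sym2 V) (F : Set E) (P : V → Prop)
    (hinv : ∀ f ∈ F, ∀ x y : V, ends f = s(x, y) → P x → P y)
    {a c : V} (hab : Relation.ReflTransGen (Step ends F) a c) (ha : P a) : P c := by
  induction hab with
  | refl => exact ha
  | tail _ hstep ih =>
    obtain ⟨e, he, hends⟩ := hstep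
    exact hinv e he _ _ hends ih

include hb in
lemma minimal_TT : ∀ e ∈ TT Φ b k, ¬ Connects (ends Φ) (TT Φ b k \ {e}) := by
  intro e he hconn
  obtain ⟨x₀, hx₀⟩ := pe_surj Φ b k e he
  have hx₀r : x₀ ≠ .r := by
    rintro rfl; simp [pe] at hx₀
  obtain ⟨hmem, hends⟩ := pe_spec Φ b k x₀ e hx₀
  set P : Vtx n m → Prop := fun y => ∃ K ≤ 5, (par Φ b)^[K] y = x₀ with hP
  have hinv : ∀ f ∈ TT Φ b k \ {e}, ∀ x y : Vtx n m,
      ends Φ f = s(x, y) → P x → P y := by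
    rintro f ⟨hfT, hfe⟩ x y hxy hPx
    simp only [Set.mem_singleton_iff] at hfe
    obtain ⟨y', hy'⟩ := pe_surj Φ b k f hfT
    have hy'x₀ : y' ≠ x₀ := by rintro rfl; rw [hx₀] at hy'; exact hfe (Option.some_injective _ hy').symm
    obtain ⟨_, hends'⟩ := pe_spec Φ b k y' f hy'
    rw [hends'] at hxy
    have hiff : P y' ↔ P (par Φ b y') := by
      constructor
      · rintro ⟨K, hK, hit⟩
        cases K with
        | zero => exact absurd hit hy'x₀
        | succ K =>
          rw [Function.iterate_succ_apply] at hit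
          exact ⟨K, by omega, hit⟩
      · rintro ⟨K, hK, hit⟩
        rcases Nat.lt_or_ge K 5 with hK5 | hK5
        · exact ⟨K + 1, by omega, by rw [Function.iterate_succ_apply]; exact hit⟩
        · exfalso
          have hK' : K = 5 := by omega
          subst hK'
          have : (par Φ b)^[5] (par Φ b y') = .r :=
            par_iter_root Φ b hb 5 _ (rk_le Φ b _)
          rw [hit] at this
          exact hx₀r this
      -- end
    rcases Sym2.eq_iff.mp hxy with ⟨rfl, rfl⟩ | ⟨rfl, rfl⟩
    · exact hiff.mp hPx
    · exact hiff.mpr hPx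
  have hstart : P x₀ := ⟨0, by omega, rfl⟩
  have hend : P (par Φ b x₀) :=
    walk_invariant (ends Φ) _ P hinv (hconn x₀ (par Φ b x₀)) hstart
  obtain ⟨K, hK, hit⟩ := hend
  have h1 : rk Φ b ((par Φ b)^[K] (par Φ b x₀)) ≤ rk Φ b (par Φ b x₀) :=
    rk_iter_le Φ b hb K _
  rw [hit] at h1
  have h2 := rk_par Φ b hb x₀ hx₀r
  omega

include hb in
lemma spanning_TT : IsSpanningTree (ends Φ) (TT Φ b k) :=
  ⟨connects_TT Φ b k hb, minimal_TT Φ b k hb⟩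

lemma rainbow_TT : Rainbow (color Φ) (TT Φ b k) := by
  have hocc : Function.Injective Φ.occ := Φ.occ.injective
  intro e he f hf hc
  cases e <;> cases f <;>
    simp only [color, Col.rpar.injEq, Col.ca.injEq, Col.cb.injEq, Col.cc.injEq,
      Col.cd.injEq] at hc <;>
    simp only [TT, Set.Mem, Membership.mem] at he hf
  all_goals try (obtain ⟨rfl, rfl⟩ := hc; rfl)
  all_goals obtain ⟨h1, h2⟩ := hc
  all_goals try (exfalso; subst h1; rw [he] at hf; exact Bool.noConfusion hf)
  case uv.uv i p i' p' =>
    subst h1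
    have h3 : p = p' := sub_left_inj.mp h2
    subst h3
    rfl
  case zc.zc j q j' q' =>
    have h3 : Φ.occ (j, q) = Φ.occ (j', q') := Prod.ext h1 h2
    have h4 := hocc h3
    rw [Prod.mk.injEq] at h4
    obtain ⟨rfl, rfl⟩ := h4
    rfl
  case tri.tri j q j' q' =>
    have h3 : Φ.occ (j, q) = Φ.occ (j', q') := Prod.ext h1 h2
    have h4 := hocc h3
    rw [Prod.mk.injEq] at h4
    obtain ⟨rfl, rfl⟩ := h4
    rfl
  case ru.ru i p b' i' p' b'' =>
    subst h1; subst h2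
    rw [he, hf]

end Tree

/-- If `Φ` has a not-all-equal truth assignment, then the edge set of
the edge-colored graph `G(Φ)` can be partitioned into two rainbow spanning trees. -/
theorem two_rainbow_spanning_trees_of_nae {n m : ℕ} (Φ : NAE4Instance n m)
    (h : HasNAEAssignment Φ) :
    ∃ T₁ T₂ : Set (Edg n m), TwoRainbowSpanningTrees Φ T₁ T₂ := by
  obtain ⟨a, ha⟩ := h
  refine ⟨TT Φ a 0, TT Φ (fun i => !a i) 1, ?_, ?_, ?_, ?_, ?_, ?_⟩
  · ext e
    simp only [Set.mem_union, Set.mem_univ, iff_true]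
    cases e <;> simp only [TT, Set.Mem, Membership.mem] <;>
      first
        | (rename_i i _; cases a i <;> simp)
        | (rename_i j q; cases a (Φ.occ (j, q)).1 <;> simp)
        | (rename_i i p b'; fin_cases b' <;> simp)
  · rw [Set.disjoint_left]
    intro e he hf
    cases e <;> simp only [TT, Set.Mem, Membership.mem] at he hf <;>
      (rw [he] at hf; simp at hf)
  · exact spanning_TT Φ a 0 (fun j => (ha j).1)
  · refine spanning_TT Φ (fun i => !a i) 1 (fun j => ?_)
    obtain ⟨q, hq⟩ := (ha j).2
    exact ⟨q, by simp [hq]⟩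
  · exact rainbow_TT Φ a 0
  · exact rainbow_TT Φ (fun i => !a i) 1


end PackingRainbowStmt1
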